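/- Let K be a number field, O_K its ring of integers, and 𝔭 a nonzero prime ideal of O_K. If r, s, t are real numbers with 0 < r ≤ s ≤ t and both f_{𝔭,r} and f_{𝔭,t} are Euclidean functions on O_K, then f_{𝔭,s} is also a Euclidean function on O_K. In particular, the Euclidean window w(𝔭) is an interval. -/

import Mathlib

open scoped Classical

open NumberField IsDedekindDomain

/-- The exponent `v_𝔭(α)` of the prime `v` in the factorization of the fractional
ideal `α·𝓞 K`, for `α ≠ 0`; by convention `adicVal v 0 = 0`. -/
noncomputable def adicVal {K : Type*} [Field K] [NumberField K]
    (v : HeightOneSpectrum (𝓞 K)) (α : K) : ℤ :=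
  if h : α = 0 then 0
  else -Multiplicative.toAdd (WithZero.unzero ((Valuation.ne_zero_iff (v.valuation K)).mpr h))

/-- The weighted norm `f_{𝔭,c}(α) = |N(α)| · (c/N𝔭)^{v_𝔭(α)}`, with `f_{𝔭,c}(0) = 0`. -/
noncomputable def weightedNorm {K : Type*} [Field K] [NumberField K]
    (v : HeightOneSpectrum (𝓞 K)) (c : ℝ) (α : K) : ℝ :=
  if α = 0 then 0
  else |(Algebra.norm ℚ α : ℚ)| * (c / (Ideal.absNorm v.asIdeal : ℝ)) ^ (adicVal v α)

/-- `f` is a Euclidean function on `𝓞 K`. -/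
def IsEuclideanFunction {K : Type*} [Field K] [NumberField K] (f : K → ℝ) : Prop :=
  ∀ a b : 𝓞 K, b ≠ 0 → ∃ q : 𝓞 K, f ((a : K) - b * q) < f (b : K)

section Aux

variable {K : Type*} [Field K] [NumberField K] (v : HeightOneSpectrum (𝓞 K))

lemma valuation_eq_adicVal {α : K} (h : α ≠ 0) :
    v.valuation K α = ((Multiplicative.ofAdd (-adicVal v α) : Multiplicative ℤ) :
      WithZero (Multiplicative ℤ)) := by
  rw [adicVal, dif_neg h, neg_neg, ofAdd_toAdd, WithZero.coe_unzero]

lemma adicVal_mul {α β : K} (ha : α ≠ 0) (hb : β ≠ 0) :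
    adicVal v (α * β) = adicVal v α + adicVal v β := by
  have h := (v.valuation K).map_mul α β
  rw [valuation_eq_adicVal v ha, valuation_eq_adicVal v hb,
    valuation_eq_adicVal v (mul_ne_zero ha hb), ← WithZero.coe_mul, WithZero.coe_inj,
    ← ofAdd_add] at h
  have := Multiplicative.ofAdd.injective h
  omega

lemma adicVal_sub {α β : K} (ha : α ≠ 0) (hb : β ≠ 0) (hab : α - β ≠ 0) :
    min (adicVal v α) (adicVal v β) ≤ adicVal v (α - β) := by
  have h := (v.valuation K).map_sub α β
  rw [valuation_eq_adicVal v ha, valuation_eq_adicVal v hb, valuation_eq_adicVal v hab,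
    le_sup_iff] at h
  rcases h with h | h <;>
    { rw [WithZero.coe_le_coe, Multiplicative.ofAdd_le] at h; omega }

lemma adicVal_int_nonneg (q : 𝓞 K) (hq : (q : K) ≠ 0) : 0 ≤ adicVal v (q : K) := by
  have h : v.valuation K ((algebraMap (𝓞 K) K) q) ≤ 1 := v.valuation_le_one q
  have hq' : (algebraMap (𝓞 K) K) q = (q : K) := rfl
  rw [hq', valuation_eq_adicVal v hq,
    show (1 : WithZero (Multiplicative ℤ)) = ((Multiplicative.ofAdd (0 : ℤ) :
      Multiplicative ℤ) : WithZero (Multiplicative ℤ)) from rfl,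
    WithZero.coe_le_coe, Multiplicative.ofAdd_le] at h
  omega

lemma absNorm_pos : (0 : ℝ) < (Ideal.absNorm v.asIdeal : ℝ) := by
  have : Ideal.absNorm v.asIdeal ≠ 0 := by
    rw [Ne, Ideal.absNorm_eq_zero_iff]
    exact v.ne_bot
  positivity

lemma absNormElem_pos {α : K} (h : α ≠ 0) : (0 : ℝ) < |((Algebra.norm ℚ α : ℚ) : ℝ)| := by
  rw [abs_pos]
  exact_mod_cast (Algebra.norm_ne_zero_iff).mpr h

lemma weightedNorm_pos {c : ℝ} (hc : 0 < c) {α : K} (h : α ≠ 0) : 0 < weightedNorm v c α := by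
  rw [weightedNorm, if_neg h]
  push_cast
  exact mul_pos (absNormElem_pos h) (zpow_pos (div_pos hc (absNorm_pos v)) _)

/-- The key comparison lemma. -/
lemma weightedNorm_lt_of_lt {c c' : ℝ} (hc : 0 < c) (hc' : 0 < c') {x b : K}
    (hx : x ≠ 0) (hb : b ≠ 0)
    (hmono : (c' / c) ^ (adicVal v x) ≤ (c' / c) ^ (adicVal v b))
    (h : weightedNorm v c x < weightedNorm v c b) :
    weightedNorm v c' x < weightedNorm v c' b := by
  have hN := absNorm_pos v
  have hcN : 0 < c / (Ideal.absNorm v.asIdeal : ℝ) := div_pos hc hN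
  have key : ∀ α : K, α ≠ 0 →
      weightedNorm v c' α = weightedNorm v c α * (c' / c) ^ (adicVal v α) := by
    intro α hα
    rw [weightedNorm, weightedNorm, if_neg hα, if_neg hα, mul_assoc, ← mul_zpow]
    congr 2
    field_simp
  rw [key x hx, key b hb]
  calc weightedNorm v c x * (c' / c) ^ (adicVal v x)
      ≤ weightedNorm v c x * (c' / c) ^ (adicVal v b) :=
        mul_le_mul_of_nonneg_left hmono (weightedNorm_pos v hc hx).le
    _ < weightedNorm v c b * (c' / c) ^ (adicVal v b) :=
        mul_lt_mul_of_pos_right h (zpow_pos (div_pos hc' hc) _)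

end Aux

/-- If `f_{𝔭,r}` and `f_{𝔭,t}` are Euclidean functions on `𝓞 K` and `r ≤ s ≤ t`,
then `f_{𝔭,s}` is a Euclidean function on `𝓞 K` (the Euclidean window is an interval). -/
theorem euclidean_window_interval {K : Type*} [Field K] [NumberField K]
    (P : Ideal (𝓞 K)) (hP : P.IsPrime) (h0 : P ≠ ⊥)
    (r s t : ℝ) (hr : 0 < r) (hrs : r ≤ s) (hst : s ≤ t)
    (hEr : IsEuclideanFunction (weightedNorm ⟨P, hP, h0⟩ r))
    (hEt : IsEuclideanFunction (weightedNorm ⟨P, hP, h0⟩ t)) :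
    IsEuclideanFunction (weightedNorm ⟨P, hP, h0⟩ s) := by
  set v : HeightOneSpectrum (𝓞 K) := ⟨P, hP, h0⟩
  have hs : 0 < s := lt_of_lt_of_le hr hrs
  have ht : 0 < t := lt_of_lt_of_le hs hst
  intro a b hb
  have hbK : (b : K) ≠ 0 := by exact_mod_cast hb
  obtain ⟨qr, hqr⟩ := hEr a b hb
  obtain ⟨qt, hqt⟩ := hEt a b hb
  set xr : K := (a : K) - b * qr with hxrdef
  set xt : K := (a : K) - b * qt with hxtdef
  by_cases hxr0 : xr = 0
  · refine ⟨qr, ?_⟩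
    rw [show ((a : K) - b * qr) = xr from rfl, weightedNorm, if_pos hxr0]
    exact weightedNorm_pos v hs hbK
  by_cases hxt0 : xt = 0
  · refine ⟨qt, ?_⟩
    rw [show ((a : K) - b * qt) = xt from rfl, weightedNorm, if_pos hxt0]
    exact weightedNorm_pos v hs hbK
  have hkey : adicVal v xr ≤ adicVal v (b : K) ∨ adicVal v (b : K) ≤ adicVal v xt := by
    by_contra hcon
    push_neg at hcon
    obtain ⟨h1, h2⟩ := hcon
    -- xr - xt = b * (qt - qr)
    have hdiff : xr - xt = (b : K) * ((qt : K) - (qr : K)) := by ring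
    have hne : xr ≠ xt := fun h => by rw [h] at h1; omega
    have hsub : xr - xt ≠ 0 := sub_ne_zero.mpr hne
    have hq : ((qt : K) - (qr : K)) ≠ 0 := by
      intro h; apply hsub; rw [hdiff, h, mul_zero]
    have hqO : ((qt - qr : 𝓞 K) : K) = (qt : K) - (qr : K) := by push_cast; ring
    have h3 : adicVal v (b : K) ≤ adicVal v (xr - xt) := by
      rw [hdiff, adicVal_mul v hbK hq]
      have := adicVal_int_nonneg v (qt - qr) (by rw [hqO]; exact hq)
      rw [hqO] at this
      omega
    have h4 := adicVal_sub v hxr0 hsub (by rw [sub_sub_cancel]; exact hxt0)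
    rw [sub_sub_cancel] at h4
    omega
  rcases hkey with hle | hle
  · refine ⟨qr, weightedNorm_lt_of_lt v hr hs hxr0 hbK ?_ hqr⟩
    exact zpow_le_zpow_right₀ ((one_le_div hr).mpr hrs) hle
  · refine ⟨qt, weightedNorm_lt_of_lt v ht hs hxt0 hbK ?_ hqt⟩
    exact zpow_le_zpow_right_of_le_one₀ (div_pos hs ht) ((div_le_one ht).mpr hst) hle
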